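/- For integers n > m ≥ 1, consider the customer attraction game with node set N = {q_1, …, q_n}, agent set A = {1, …, m}, all weights and values equal to 1, and common strategy space 𝒮 = {{q_1,…,q_m}, {q_{m+1}}, {q_{m+2}}, …, {q_n}} for every agent. Then: (i) the profile in which every agent selects {q_1,…,q_m} is a pure Nash equilibrium with social welfare m; (ii) the maximum social welfare over all strategy profiles equals min{n, 2m−1}. Consequently this instance has price of anarchy at least min{n/m, 2 − 1/m}. -/

import Mathlib

open Finset

/-- A customer attraction game: nodes `N` with integer values `≥ 1`, agents `A`
with integer weights `≥ 1`, and a nonempty finite strategy space (a finite set of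
subsets of `N`) for each agent. -/
structure CAG (N A : Type*) [Fintype N] [Fintype A] where
  v : N → ℕ
  v_pos : ∀ j, 1 ≤ v j
  w : A → ℕ
  w_pos : ∀ i, 1 ≤ w i
  strat : A → Finset (Finset N)
  strat_ne : ∀ i, (strat i).Nonempty

variable {N A : Type*} [Fintype N] [Fintype A] [DecidableEq N]

/-- The load `c(j,S)` of node `j`: total weight of agents attracting `j`. -/
def CAG.load (G : CAG N A) (S : A → Finset N) (j : N) : ℕ :=
  ∑ i : A, if j ∈ S i then G.w i else 0

/-- The utility `U_i(S) = ∑_{j ∈ S_i} v_j · w_i / c(j,S)`. -/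
noncomputable def CAG.util (G : CAG N A) (S : A → Finset N) (i : A) : ℝ :=
  ∑ j ∈ S i, (G.v j : ℝ) * (G.w i : ℝ) / (G.load S j : ℝ)

/-- A strategy profile: each agent plays a strategy from her strategy space. -/
def CAG.valid (G : CAG N A) (S : A → Finset N) : Prop :=
  ∀ i, S i ∈ G.strat i

/-- Pure Nash equilibrium. -/
def CAG.PNE [DecidableEq A] (G : CAG N A) (S : A → Finset N) : Prop :=
  G.valid S ∧ ∀ i, ∀ S' ∈ G.strat i, G.util (Function.update S i S') i ≤ G.util S i

/-- Social welfare. -/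
noncomputable def CAG.sw (G : CAG N A) (S : A → Finset N) : ℝ :=
  ∑ i : A, G.util S i

/-- The harmonic number `H_c = ∑_{k=1}^{c} 1/k`. -/
noncomputable def harm (c : ℕ) : ℝ := ∑ k ∈ Finset.range c, (1 : ℝ) / (k + 1)

/-- Rosenthal-type potential `Φ(S) = ∑_j v_j ∑_{k=1}^{c(j,S)} 1/k`. -/
noncomputable def CAG.pot (G : CAG N A) (S : A → Finset N) : ℝ :=
  ∑ j : N, (G.v j : ℝ) * harm (G.load S j)

/-- The "big" strategy `{q_1, …, q_m}`. -/
def bigS (n m : ℕ) : Finset (Fin n) := Finset.univ.filter (fun q => (q : ℕ) < m)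

/-- The singleton strategies `{q_{m+1}}, …, {q_n}`. -/
def smallS (n m : ℕ) : Finset (Finset (Fin n)) :=
  (Finset.univ.filter (fun q : Fin n => m ≤ (q : ℕ))).image (fun q => {q})

/-- The common strategy space `𝒮 = {{q_1,…,q_m}, {q_{m+1}}, …, {q_n}}`. -/
def SS (n m : ℕ) : Finset (Finset (Fin n)) := insert (bigS n m) (smallS n m)

/-- The lower-bound instance: `n` unit-value nodes, `m` unit-weight agents, and
common strategy space `SS n m`. -/
def G5 (n m : ℕ) : CAG (Fin n) (Fin m) where
  v _ := 1
  v_pos _ := le_refl 1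
  w _ := 1
  w_pos _ := le_refl 1
  strat _ := SS n m
  strat_ne _ := ⟨bigS n m, Finset.mem_insert_self _ _⟩

-- auxiliary lemmas
lemma load_cast (G : CAG N A) (S : A → Finset N) (j : N) :
    ((G.load S j : ℝ)) = ∑ i : A, if j ∈ S i then (G.w i : ℝ) else 0 := by
  simp [CAG.load, apply_ite ((↑) : ℕ → ℝ)]

lemma load_pos_of_mem (G : CAG N A) (S : A → Finset N) {j : N} {i : A} (h : j ∈ S i) :
    0 < G.load S j := by
  have := Finset.single_le_sum (f := fun i' : A => if j ∈ S i' then G.w i' else 0)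
    (fun _ _ => Nat.zero_le _) (Finset.mem_univ i)
  simp only [if_pos h] at this
  exact lt_of_lt_of_le (G.w_pos i) this

lemma sw_eq (G : CAG N A) (S : A → Finset N) :
    G.sw S = ∑ j : N, if 0 < G.load S j then (G.v j : ℝ) else 0 := by
  unfold CAG.sw CAG.util
  have h1 : ∀ i : A, ∑ j ∈ S i, (G.v j : ℝ) * (G.w i : ℝ) / (G.load S j : ℝ)
      = ∑ j : N, if j ∈ S i then (G.v j : ℝ) * (G.w i : ℝ) / (G.load S j : ℝ) else 0 := by
    intro i
    rw [Finset.sum_ite_mem, Finset.univ_inter]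
  simp_rw [h1]
  rw [Finset.sum_comm]
  refine Finset.sum_congr rfl fun j _ => ?_
  by_cases h : 0 < G.load S j
  · rw [if_pos h]
    have key : ∑ i : A, (if j ∈ S i then (G.v j : ℝ) * (G.w i : ℝ) / (G.load S j : ℝ) else 0)
        = (G.v j : ℝ) / (G.load S j : ℝ) * ∑ i : A, (if j ∈ S i then (G.w i : ℝ) else 0) := by
      rw [Finset.mul_sum]
      refine Finset.sum_congr rfl fun i _ => ?_
      by_cases hij : j ∈ S i <;> simp [hij] <;> ring
    rw [key, ← load_cast]
    have hne : (G.load S j : ℝ) ≠ 0 := by positivity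
    field_simp
  · rw [if_neg h]
    have h0 : ∀ i : A, j ∉ S i := fun i hij => h (load_pos_of_mem G S hij)
    simp [h0]
lemma G5_load_pos_iff (n m : ℕ) (S : Fin m → Finset (Fin n)) (j : Fin n) :
    0 < (G5 n m).load S j ↔ ∃ i, j ∈ S i := by
  constructor
  · intro h
    by_contra hc
    push_neg at hc
    simp [CAG.load, G5, hc] at h
  · rintro ⟨i, hi⟩
    exact load_pos_of_mem (G5 n m) S hi

lemma G5_sw_card (n m : ℕ) (S : Fin m → Finset (Fin n)) :
    (G5 n m).sw S = ((Finset.univ.filter (fun j : Fin n => ∃ i, j ∈ S i)).card : ℝ) := by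
  rw [sw_eq]
  rw [Finset.card_filter]
  push_cast
  refine Finset.sum_congr rfl fun j _ => ?_
  by_cases h : ∃ i, j ∈ S i
  · rw [if_pos ((G5_load_pos_iff n m S j).2 h), if_pos h]; simp [G5]
  · rw [if_neg (fun hp => h ((G5_load_pos_iff n m S j).1 hp)), if_neg h]

lemma card_filter_lt (n M : ℕ) (h : M ≤ n) :
    (Finset.univ.filter (fun q : Fin n => (q : ℕ) < M)).card = M := by
  have : (Finset.univ.filter (fun q : Fin n => (q : ℕ) < M))
      = Finset.map (Fin.castLEEmb h) Finset.univ := by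
    ext j
    simp only [Finset.mem_filter, Finset.mem_univ, true_and, Finset.mem_map]
    constructor
    · intro hj
      exact ⟨⟨j, hj⟩, by simp [Fin.castLEEmb, Fin.ext_iff]⟩
    · rintro ⟨q, -, rfl⟩
      simpa [Fin.castLEEmb] using q.isLt
  rw [this, Finset.card_map, Finset.card_univ, Fintype.card_fin]

lemma mem_SS (n m : ℕ) (S' : Finset (Fin n)) :
    S' ∈ SS n m ↔ S' = bigS n m ∨ ∃ q : Fin n, m ≤ (q : ℕ) ∧ S' = {q} := by
  simp [SS, smallS, eq_comm]

/-- In the instance `G5 n m` (with `n > m ≥ 1`): (i) the profile where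
every agent selects `{q_1,…,q_m}` is a PNE with social welfare `m`; (ii) the maximum
social welfare over all profiles equals `min{n, 2m−1}`; consequently the price of
anarchy of this instance is at least `min{n/m, 2 − 1/m}`. -/
theorem lower_bound_instance (n m : ℕ) (hm : 1 ≤ m) (hnm : m < n) :
    (G5 n m).PNE (fun _ => bigS n m) ∧
    (G5 n m).sw (fun _ => bigS n m) = (m : ℝ) ∧
    (∃ S, (G5 n m).valid S ∧ (G5 n m).sw S = (min n (2 * m - 1) : ℕ)) ∧
    (∀ S, (G5 n m).valid S → (G5 n m).sw S ≤ (min n (2 * m - 1) : ℕ)) ∧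
    min ((n : ℝ) / (m : ℝ)) (2 - 1 / (m : ℝ)) ≤ ((min n (2 * m - 1) : ℕ) : ℝ) / (m : ℝ) := by
  have hmn : m ≤ n := le_of_lt hnm
  have hm0 : (0 : ℝ) < (m : ℝ) := by exact_mod_cast hm
  set S0 : Fin m → Finset (Fin n) := fun _ => bigS n m with hS0
  -- load of S0 on bigS nodes
  have hload0 : ∀ j ∈ bigS n m, (G5 n m).load S0 j = m := by
    intro j hj
    simp [CAG.load, G5, hS0, hj]
  -- utility of every agent in S0 is 1
  have hutil0 : ∀ i : Fin m, (G5 n m).util S0 i = 1 := by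
    intro i
    unfold CAG.util
    have : ∀ j ∈ S0 i, ((G5 n m).v j : ℝ) * ((G5 n m).w i : ℝ) / ((G5 n m).load S0 j : ℝ)
        = 1 / (m : ℝ) := by
      intro j hj
      rw [hload0 j hj]
      simp [G5]
    rw [Finset.sum_congr rfl this, Finset.sum_const]
    have hcard : (S0 i).card = m := card_filter_lt n m hmn
    rw [hcard]
    rw [nsmul_eq_mul, mul_one_div_cancel hm0.ne']
  have hbig_mem : bigS n m ∈ SS n m := Finset.mem_insert_self _ _
  constructor
  · -- PNE
    refine ⟨fun i => hbig_mem, fun i S' hS' => ?_⟩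
    rw [hutil0 i]
    rcases (mem_SS n m S').1 hS' with rfl | ⟨q, hq, rfl⟩
    · have : Function.update S0 i (bigS n m) = S0 := by
        funext i'
        by_cases h : i' = i <;> simp [Function.update, h, hS0]
      rw [this, hutil0 i]
    · -- deviation to singleton {q}, q ≥ m
      have hload' : (G5 n m).load (Function.update S0 i {q}) q = 1 := by
        unfold CAG.load
        rw [Finset.sum_eq_single i]
        · simp [G5, Function.update_self]
        · intro i' _ hne
          have : Function.update S0 i {q} i' = bigS n m := by
            simp [Function.update, hne, hS0]
          rw [this]
          have : q ∉ bigS n m := by simp [bigS]; omega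
          simp [this]
        · simp
      unfold CAG.util
      rw [Function.update_self, Finset.sum_singleton, hload']
      simp [G5]
  refine ⟨?_, ?_, ?_, ?_⟩
  · -- sw S0 = m
    rw [G5_sw_card]
    have : Finset.univ.filter (fun j : Fin n => ∃ i : Fin m, j ∈ S0 i)
        = Finset.univ.filter (fun q : Fin n => (q : ℕ) < m) := by
      refine Finset.filter_congr fun j _ => ?_
      constructor
      · rintro ⟨i, hi⟩; simpa [hS0, bigS] using hi
      · intro h; exact ⟨⟨0, hm⟩, by simpa [hS0, bigS] using h⟩
    rw [this, card_filter_lt n m hmn]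
  · -- achievability
    set M := min n (2 * m - 1) with hM
    have hMn : M ≤ n := min_le_left _ _
    have hMm : m ≤ M := le_min hmn (by omega)
    refine ⟨fun i => if h : 1 ≤ (i : ℕ) ∧ m + (i : ℕ) - 1 < n
      then ({⟨m + (i : ℕ) - 1, h.2⟩} : Finset (Fin n)) else bigS n m, ?_, ?_⟩
    · intro i
      dsimp only
      by_cases h : 1 ≤ (i : ℕ) ∧ m + (i : ℕ) - 1 < n
      · rw [dif_pos h]
        exact (mem_SS n m _).2 (Or.inr ⟨⟨m + (i : ℕ) - 1, h.2⟩, by simp; omega, rfl⟩)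
      · rw [dif_neg h]
        exact hbig_mem
    · rw [G5_sw_card]
      have hcov : Finset.univ.filter (fun j : Fin n => ∃ i : Fin m, j ∈
            (if h : 1 ≤ (i : ℕ) ∧ m + (i : ℕ) - 1 < n
              then ({⟨m + (i : ℕ) - 1, h.2⟩} : Finset (Fin n)) else bigS n m))
          = Finset.univ.filter (fun q : Fin n => (q : ℕ) < M) := by
        refine Finset.filter_congr fun j _ => ?_
        constructor
        · rintro ⟨i, hi⟩
          by_cases h : 1 ≤ (i : ℕ) ∧ m + (i : ℕ) - 1 < n
          · rw [dif_pos h, Finset.mem_singleton] at hi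
            have hj : (j : ℕ) = m + (i : ℕ) - 1 := by rw [hi]
            have := i.isLt
            simp only [hM, lt_min_iff]
            omega
          · rw [dif_neg h] at hi
            have : (j : ℕ) < m := by simpa [bigS] using hi
            omega
        · intro hj
          by_cases h : (j : ℕ) < m
          · refine ⟨⟨0, hm⟩, ?_⟩
            rw [dif_neg (by simp)]
            simpa [bigS] using h
          · push_neg at h
            have h1 : (j : ℕ) < 2 * m - 1 := lt_of_lt_of_le hj (min_le_right _ _)
            have h2 : (j : ℕ) < n := lt_of_lt_of_le hj hMn
            refine ⟨⟨(j : ℕ) - m + 1, by omega⟩, ?_⟩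
            have hc : 1 ≤ ((⟨(j : ℕ) - m + 1, by omega⟩ : Fin m) : ℕ) ∧
                m + ((⟨(j : ℕ) - m + 1, by omega⟩ : Fin m) : ℕ) - 1 < n := by
              simp only [Fin.val_mk]; omega
            rw [dif_pos hc, Finset.mem_singleton]
            apply Fin.ext
            simp only [Fin.val_mk]
            omega
      rw [hcov, card_filter_lt n M hMn]
  · -- upper bound
    intro S hS
    rw [G5_sw_card]
    have hcast : ∀ a b : ℕ, a ≤ b → (a : ℝ) ≤ (b : ℝ) := fun a b h => by exact_mod_cast h
    apply hcast
    have hcov : Finset.univ.filter (fun j : Fin n => ∃ i : Fin m, j ∈ S i)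
        = Finset.univ.biUnion S := by
      ext j; simp
    rw [hcov]
    have hn : (Finset.univ.biUnion S).card ≤ n := by
      have := Finset.card_le_univ (Finset.univ.biUnion S)
      simpa using this
    refine le_min hn ?_
    by_cases hbig : ∃ i0, S i0 = bigS n m
    · obtain ⟨i0, hi0⟩ := hbig
      have hsub : Finset.univ.biUnion S ⊆
          bigS n m ∪ Finset.univ.biUnion (fun i => S i \ bigS n m) := by
        intro j hj
        rw [Finset.mem_biUnion] at hj
        obtain ⟨i, -, hji⟩ := hj
        by_cases h : j ∈ bigS n m
        · exact Finset.mem_union_left _ h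
        · exact Finset.mem_union_right _ (Finset.mem_biUnion.2 ⟨i, Finset.mem_univ i,
            Finset.mem_sdiff.2 ⟨hji, h⟩⟩)
      have hsd : ∀ i : Fin m, (S i \ bigS n m).card ≤ if i = i0 then 0 else 1 := by
        intro i
        rcases (mem_SS n m (S i)).1 (hS i) with hb | ⟨q, hq, hsing⟩
        · rw [hb]; simp
        · split
          · next h =>
            rw [h, hi0] at hsing
            -- bigS = {q}: then card bigS = 1, and... instead: bigS \ bigS = ∅
            rw [h, hi0]; simp
          · rw [hsing]
            exact le_trans (Finset.card_le_card (Finset.sdiff_subset)) (by simp)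
      calc (Finset.univ.biUnion S).card
          ≤ (bigS n m ∪ Finset.univ.biUnion (fun i => S i \ bigS n m)).card :=
            Finset.card_le_card hsub
        _ ≤ (bigS n m).card + (Finset.univ.biUnion (fun i => S i \ bigS n m)).card :=
            Finset.card_union_le _ _
        _ ≤ m + ∑ i : Fin m, (S i \ bigS n m).card := by
            have hb : (bigS n m).card = m := card_filter_lt n m hmn
            rw [hb]
            exact Nat.add_le_add_left (Finset.card_biUnion_le) m
        _ ≤ m + ∑ i : Fin m, (if i = i0 then 0 else 1) :=
            Nat.add_le_add_left (Finset.sum_le_sum fun i _ => hsd i) m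
        _ ≤ m + (m - 1) := by
            refine Nat.add_le_add_left ?_ m
            rw [← Finset.add_sum_erase _ _ (Finset.mem_univ i0), if_pos rfl]
            have h1 : ∑ i ∈ Finset.univ.erase i0, (if i = i0 then 0 else 1)
                = (Finset.univ.erase i0).card := by
              rw [Finset.sum_congr rfl (fun i hi => if_neg (Finset.ne_of_mem_erase hi))]
              simp
            rw [h1, Finset.card_erase_of_mem (Finset.mem_univ i0)]
            simp
        _ ≤ 2 * m - 1 := by omega
    · push_neg at hbig
      have : ∀ i : Fin m, (S i).card ≤ 1 := by
        intro i
        rcases (mem_SS n m (S i)).1 (hS i) with hb | ⟨q, hq, hsing⟩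
        · exact absurd hb (hbig i)
        · rw [hsing]; simp
      calc (Finset.univ.biUnion S).card
          ≤ ∑ i : Fin m, (S i).card := Finset.card_biUnion_le
        _ ≤ ∑ i : Fin m, 1 := Finset.sum_le_sum fun i _ => this i
        _ = m := by simp
        _ ≤ 2 * m - 1 := by omega
  · -- price of anarchy bound
    rcases le_total n (2 * m - 1) with h | h
    · rw [min_eq_left h]
      exact min_le_left _ _
    · rw [min_eq_right h]
      have h2 : ((2 * m - 1 : ℕ) : ℝ) = 2 * (m : ℝ) - 1 := by
        have : 1 ≤ 2 * m := by omega
        push_cast [this]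
        ring
      rw [h2]
      have : (2 * (m : ℝ) - 1) / (m : ℝ) = 2 - 1 / (m : ℝ) := by
        field_simp
      rw [this]
      exact min_le_right _ _
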